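/- Let S be a finite set, π_ref a full-support distribution on S, g : S → ℝ, τ > 0. The optimization problem min over full-support distributions π of E_{y,y'∼π⊗π}[(h_π(y,y') − (g(y)−g(y'))/τ)²] has π*(y) ∝ π_ref(y)·exp(g(y)/τ) as its unique global minimizer among full-support distributions, and no other local minima exist. -/

import Mathlib

open Finset Filter Set Topology

section BFPOAux

lemma sum_expand {S : Type*} [Fintype S] (p u : S → ℝ) (h1 : ∑ y, p y = 1) :
    ∑ y, ∑ y', p y * p y' * (u y - u y') ^ 2
      = 2 * (∑ y, p y * u y ^ 2) - 2 * (∑ y, p y * u y) ^ 2 := by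
  have key : ∀ y, ∑ y', p y * p y' * (u y - u y') ^ 2
      = p y * u y ^ 2 * (∑ y', p y') - 2 * (p y * u y) * (∑ y', p y' * u y')
        + p y * (∑ y', p y' * u y' ^ 2) := by
    intro y
    rw [Finset.mul_sum, Finset.mul_sum, Finset.mul_sum, ← Finset.sum_sub_distrib,
      ← Finset.sum_add_distrib]
    exact Finset.sum_congr rfl fun y' _ => by ring
  simp_rw [key, h1]
  rw [Finset.sum_add_distrib, Finset.sum_sub_distrib, ← Finset.sum_mul, ← Finset.sum_mul,
    ← Finset.sum_mul]
  rw [h1, Finset.sum_mul, ← Finset.sum_mul]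
  ring_nf
  have h2 : ∑ x, p x * u x * 2 = 2 * ∑ x, p x * u x := by
    rw [Finset.mul_sum]; exact Finset.sum_congr rfl fun _ _ => by ring
  rw [h2]
  ring

section helpers
-- (helpers from t2 assumed; re-insert here)
lemma hd_A (p w t : ℝ) : HasDerivAt (fun s => p + s * w) w t := by
  simpa using ((hasDerivAt_id t).mul_const w).const_add p

lemma hd_f1 (c p w t : ℝ) (h : 0 < p + t * w) :
    HasDerivAt (fun s => (p + s * w) * (Real.log (p + s * w) - c))
      (w * (Real.log (p + t * w) - c + 1)) t := by
  have hA := hd_A p w t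
  have hlog := hA.log h.ne'
  have := hA.mul (hlog.sub_const c)
  refine this.congr_deriv ?_
  rw [mul_div_cancel₀ _ h.ne']
  ring

lemma hd_f2 (c p w t : ℝ) (h : 0 < p + t * w) :
    HasDerivAt (fun s => (p + s * w) * (Real.log (p + s * w) - c) ^ 2)
      (w * ((Real.log (p + t * w) - c) ^ 2 + 2 * (Real.log (p + t * w) - c))) t := by
  have hA := hd_A p w t
  have hlog := hA.log h.ne'
  have := hA.mul ((hlog.sub_const c).pow 2)
  refine this.congr_deriv ?_
  simp only [Pi.pow_apply]
  rw [mul_left_comm (p + t * w), mul_div_cancel₀ _ h.ne']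
  ring

lemma hd_f1' (c p w t : ℝ) (h : 0 < p + t * w) :
    HasDerivAt (fun s => w * (Real.log (p + s * w) - c + 1)) (w ^ 2 / (p + t * w)) t := by
  have hA := hd_A p w t
  have hlog := hA.log h.ne'
  have := ((hlog.sub_const c).add_const 1).const_mul w
  refine this.congr_deriv ?_
  field_simp

lemma hd_f2' (c p w t : ℝ) (h : 0 < p + t * w) :
    HasDerivAt (fun s => w * ((Real.log (p + s * w) - c) ^ 2 + 2 * (Real.log (p + s * w) - c)))
      (w ^ 2 / (p + t * w) * (2 * (Real.log (p + t * w) - c) + 2)) t := by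
  have hA := hd_A p w t
  have hlog := hA.log h.ne'
  have := (((hlog.sub_const c).pow 2).add ((hlog.sub_const c).const_mul 2)).const_mul w
  refine this.congr_deriv ?_
  field_simp
  ring
end helpers

lemma aux_conditions {S : Type*} [Fintype S] [Nonempty S] (c : S → ℝ) (L : (S → ℝ) → ℝ)
    (hL2 : ∀ p : S → ℝ, (∀ y, 0 < p y) → (∑ y, p y) = 1 →
      L p = 2 * (∑ y, p y * (Real.log (p y) - c y) ^ 2)
          - 2 * (∑ y, p y * (Real.log (p y) - c y)) ^ 2)
    (Δ : Set (S → ℝ)) (hΔ : Δ = {p : S → ℝ | (∀ y, 0 < p y) ∧ (∑ y, p y) = 1})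
    (π : S → ℝ) (hπpos : ∀ y, 0 < π y) (hπ1 : (∑ y, π y) = 1)
    (hmin : IsLocalMinOn L Δ π) (w : S → ℝ) (hw : ∑ y, w y = 0) :
    2 * (∑ y, w y * ((Real.log (π y) - c y) ^ 2 + 2 * (Real.log (π y) - c y)))
      - 4 * (∑ y, π y * (Real.log (π y) - c y)) * (∑ y, w y * (Real.log (π y) - c y + 1)) = 0 ∧
    0 ≤ 2 * (∑ y, w y ^ 2 / π y * (2 * (Real.log (π y) - c y) + 2))
      - 4 * ((∑ y, w y * (Real.log (π y) - c y + 1)) ^ 2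
          + (∑ y, π y * (Real.log (π y) - c y)) * (∑ y, w y ^ 2 / π y)) := by
  classical
  obtain ⟨y₀⟩ := ‹Nonempty S›
  set ε : ℝ := Finset.univ.inf' Finset.univ_nonempty (fun y => π y / (|w y| + 1)) with hεdef
  have hε : 0 < ε := by
    rw [hεdef, Finset.lt_inf'_iff]
    intro y _
    exact div_pos (hπpos y) (by positivity)
  have hpos : ∀ t : ℝ, |t| < ε → ∀ y, 0 < π y + t * w y := by
    intro t ht y
    have h1 : ε ≤ π y / (|w y| + 1) := Finset.inf'_le _ (Finset.mem_univ y)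
    have h2 : |t * w y| < π y := by
      rw [abs_mul]
      have h3 : |t| * |w y| ≤ |t| * (|w y| + 1) := by nlinarith [abs_nonneg t]
      have h4 : |t| * (|w y| + 1) < ε * (|w y| + 1) := by nlinarith [abs_nonneg (w y)]
      have h5 : ε * (|w y| + 1) ≤ π y := by
        rw [le_div_iff₀ (by positivity : (0:ℝ) < |w y| + 1)] at h1
        linarith
      linarith
    have := neg_abs_le (t * w y)
    linarith
  have hsum : ∀ t : ℝ, ∑ y, (π y + t * w y) = 1 := by
    intro t
    rw [Finset.sum_add_distrib, hπ1, ← Finset.mul_sum, hw]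
    ring
  have hmem : ∀ t : ℝ, |t| < ε → (fun y => π y + t * w y) ∈ Δ := by
    intro t ht
    rw [hΔ]
    exact ⟨hpos t ht, hsum t⟩
  set F : ℝ → ℝ := fun t =>
    2 * (∑ y, (π y + t * w y) * (Real.log (π y + t * w y) - c y) ^ 2)
      - 2 * (∑ y, (π y + t * w y) * (Real.log (π y + t * w y) - c y)) ^ 2 with hFdef
  set F' : ℝ → ℝ := fun t =>
    2 * (∑ y, w y * ((Real.log (π y + t * w y) - c y) ^ 2 + 2 * (Real.log (π y + t * w y) - c y)))
      - 4 * (∑ y, (π y + t * w y) * (Real.log (π y + t * w y) - c y))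
          * (∑ y, w y * (Real.log (π y + t * w y) - c y + 1)) with hF'def
  set F'' : ℝ → ℝ := fun t =>
    2 * (∑ y, w y ^ 2 / (π y + t * w y) * (2 * (Real.log (π y + t * w y) - c y) + 2))
      - 4 * ((∑ y, w y * (Real.log (π y + t * w y) - c y + 1)) ^ 2
          + (∑ y, (π y + t * w y) * (Real.log (π y + t * w y) - c y))
              * (∑ y, w y ^ 2 / (π y + t * w y))) with hF''def
  have hFL : ∀ t : ℝ, |t| < ε → L (fun y => π y + t * w y) = F t := by
    intro t ht
    rw [hL2 _ (hpos t ht) (hsum t)]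
  have hdF : ∀ t : ℝ, |t| < ε → HasDerivAt F (F' t) t := by
    intro t ht
    have h2 := HasDerivAt.fun_sum (u := Finset.univ) (fun y _ => hd_f2 (c y) (π y) (w y) t (hpos t ht y))
    have h1 := HasDerivAt.fun_sum (u := Finset.univ) (fun y _ => hd_f1 (c y) (π y) (w y) t (hpos t ht y))
    have := (h2.const_mul 2).sub (((h1.pow 2).const_mul 2))
    refine this.congr_deriv ?_
    rw [hF'def]
    ring
  have hdF' : ∀ t : ℝ, |t| < ε → HasDerivAt F' (F'' t) t := by
    intro t ht
    have h2 := HasDerivAt.fun_sum (u := Finset.univ) (fun y _ => hd_f2' (c y) (π y) (w y) t (hpos t ht y))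
    have h1 := HasDerivAt.fun_sum (u := Finset.univ) (fun y _ => hd_f1 (c y) (π y) (w y) t (hpos t ht y))
    have h1' := HasDerivAt.fun_sum (u := Finset.univ) (fun y _ => hd_f1' (c y) (π y) (w y) t (hpos t ht y))
    have := (h2.const_mul 2).sub (((h1.const_mul 4).mul h1'))
    refine this.congr_deriv ?_
    rw [hF''def]
    ring
  -- local minimality of F at 0
  have h0eq : (fun y => π y + (0:ℝ) * w y) = π := by
    funext y; ring
  have htend : Tendsto (fun t : ℝ => fun y => π y + t * w y) (𝓝 0) (𝓝[Δ] π) := by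
    rw [tendsto_nhdsWithin_iff]
    constructor
    · rw [tendsto_pi_nhds]
      intro y
      have : Continuous fun t : ℝ => π y + t * w y := by continuity
      have h := this.tendsto 0
      simpa using h
    · filter_upwards [eventually_abs_sub_lt 0 hε] with t ht
      rw [sub_zero] at ht
      exact hmem t ht
  have hlocF : IsLocalMin F 0 := by
    have hev : ∀ᶠ t : ℝ in 𝓝 0, L π ≤ L (fun y => π y + t * w y) := htend.eventually hmin
    filter_upwards [hev, eventually_abs_sub_lt 0 hε] with t ht1 ht2
    rw [sub_zero] at ht2
    have hF0 : F 0 = L π := by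
      rw [← hFL 0 (by simpa using hε), h0eq]
    rw [hF0, ← hFL t ht2]
    exact ht1
  have h0ε : |(0:ℝ)| < ε := by simpa using hε
  have hF'0 : F' 0 = 0 := by
    have hd := (hdF 0 h0ε).deriv
    have := hlocF.deriv_eq_zero
    rw [hd] at this
    exact this
  have hF''0 : 0 ≤ F'' 0 := by
    by_contra hneg
    push_neg at hneg
    have h20 : HasDerivAt F' (F'' 0) 0 := hdF' 0 h0ε
    have hs := hasDerivAt_iff_tendsto_slope.mp h20
    have hlt : ∀ᶠ x in 𝓝[≠] (0:ℝ), slope F' 0 x < 0 := hs.eventually_lt_const hneg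
    have hmono : 𝓝[>] (0:ℝ) ≤ 𝓝[≠] (0:ℝ) :=
      nhdsWithin_mono 0 (fun x hx => ne_of_gt hx)
    have hlt' : ∀ᶠ t in 𝓝[>] (0:ℝ), F' t < 0 := by
      filter_upwards [hlt.filter_mono hmono, eventually_mem_nhdsWithin] with t ht1 ht2
      have ht2' : (0:ℝ) < t := ht2
      have : slope F' 0 t = F' t / t := by
        rw [slope_def_field]
        rw [hF'0]
        simp
      rw [this] at ht1
      exact (div_neg_iff.mp ht1).resolve_left (fun h => absurd ht2' (not_lt.mpr h.2.le)) |>.1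
    have hεev : ∀ᶠ t in 𝓝[>] (0:ℝ), |t| < ε := by
      filter_upwards [(eventually_abs_sub_lt 0 hε).filter_mono nhdsWithin_le_nhds] with t ht
      rwa [sub_zero] at ht
    have hS : {t : ℝ | F' t < 0 ∧ |t| < ε} ∈ 𝓝[>] (0:ℝ) := (hlt'.and hεev)
    obtain ⟨δ, hδ0, hδsub⟩ := mem_nhdsGT_iff_exists_Ioo_subset.mp hS
    have hδ0' : (0:ℝ) < δ := hδ0
    set t₀ : ℝ := δ / 2 with ht₀def
    have ht₀mem : t₀ ∈ Ioo (0:ℝ) δ := ⟨by positivity, by linarith⟩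
    have ht₀ := hδsub ht₀mem
    have hanti : StrictAntiOn F (Icc 0 t₀) := by
      apply strictAntiOn_of_deriv_neg (convex_Icc 0 t₀)
      · intro x hx
        have ht₀ε : t₀ < ε := by
          have := ht₀.2
          rwa [abs_of_pos (by positivity : (0:ℝ) < t₀)] at this
        have hxε : |x| < ε := by
          rw [abs_of_nonneg hx.1]
          linarith [hx.2]
        exact (hdF x hxε).continuousAt.continuousWithinAt
      · intro x hx
        rw [interior_Icc] at hx
        have := hδsub ⟨hx.1, hx.2.trans (by linarith)⟩
        rw [(hdF x this.2).deriv]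
        exact this.1
    obtain ⟨η, hη0, hη⟩ := Metric.eventually_nhds_iff.mp hlocF
    set t₁ : ℝ := min t₀ η / 2 with ht₁def
    have ht₁0 : 0 < t₁ := by positivity
    have ht₁t₀ : t₁ ≤ t₀ := by
      have : min t₀ η ≤ t₀ := min_le_left _ _
      linarith
    have hF1 : F t₁ < F 0 := hanti ⟨le_refl 0, by linarith⟩ ⟨ht₁0.le, ht₁t₀⟩ ht₁0
    have hF2 : F 0 ≤ F t₁ := by
      apply hη
      have : min t₀ η ≤ η := min_le_right _ _
      simp only [dist_zero_right, Real.norm_eq_abs, abs_of_pos ht₁0]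
      linarith
    linarith
  constructor
  · have := hF'0
    rw [hF'def] at this
    simpa using this
  · have := hF''0
    rw [hF''def] at this
    simpa using this

lemma neg_second (α pz a b B : ℝ) (h1 : 0 < 1 - 2*α) (h2 : (1-2*α)*(a-b) = -2)
    (hB : B = α*a + (1-α)*b) (hπ0 : 0 < pz) (hπα : pz ≤ α) (hα0 : 0 < α) :
    (a+1-B)*(1/pz - 2) + 1 - (a-B)^2 < 0 := by
  have hk : (1-2*α) * (a+1-B) = -1 := by linear_combination (1-α)*h2 - (1-2*α)*hB
  have hneg : a+1-B < 0 := by nlinarith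
  have hα2 : 2 < 1/α := by
    rw [lt_div_iff₀ hα0]; linarith
  have h1pz : 1/α ≤ 1/pz := one_div_le_one_div_of_le hπ0 hπα
  have hmul : (a+1-B)*(1/pz - 2) ≤ (a+1-B)*(1/α - 2) := by nlinarith
  have h8 : (a+1-B)*(1/α - 2) = -(1/α) := by
    field_simp
    linear_combination hk
  nlinarith [sq_nonneg (a-B)]

lemma no_spurious {S : Type*} [Fintype S] (p u : S → ℝ)
    (hppos : ∀ y, 0 < p y) (hp1 : ∑ y, p y = 1)
    (hfirst : ∀ w : S → ℝ, (∑ y, w y = 0) →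
      2 * (∑ y, w y * ((u y) ^ 2 + 2 * u y))
        - 4 * (∑ y, p y * u y) * (∑ y, w y * (u y + 1)) = 0)
    (hsecond : ∀ w : S → ℝ, (∑ y, w y = 0) →
      0 ≤ 2 * (∑ y, w y ^ 2 / p y * (2 * u y + 2))
        - 4 * ((∑ y, w y * (u y + 1)) ^ 2 + (∑ y, p y * u y) * (∑ y, w y ^ 2 / p y)))
    (y₀ z₀ : S) (hne : u y₀ ≠ u z₀) : False := by
  classical
  set B : ℝ := ∑ y, p y * u y with hBdef
  have hpair : ∀ y z : S, (u y - u z) * (u y + u z + 2 - 2 * B) = 0 := by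
    intro y z
    by_cases hyz : y = z
    · subst hyz; simp
    set w : S → ℝ := fun x => (if x = y then (1:ℝ) else 0) - (if x = z then 1 else 0) with hwdef
    have hw : ∑ x, w x = 0 := by
      rw [hwdef, Finset.sum_sub_distrib, Finset.sum_ite_eq', Finset.sum_ite_eq']
      simp
    have hwsum : ∀ f : S → ℝ, ∑ x, w x * f x = f y - f z := by
      intro f
      rw [hwdef]
      simp_rw [sub_mul, ite_mul, one_mul, zero_mul]
      rw [Finset.sum_sub_distrib, Finset.sum_ite_eq', Finset.sum_ite_eq']
      simp
    have hcond := hfirst w hw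
    rw [hwsum (fun x => (u x) ^ 2 + 2 * u x), hwsum (fun x => u x + 1)] at hcond
    linear_combination hcond / 2
  set a : ℝ := u y₀ with hadef
  set b : ℝ := u z₀ with hbdef
  have hab2 : a + b + 2 - 2 * B = 0 :=
    (mul_eq_zero.mp (hpair y₀ z₀)).resolve_left (sub_ne_zero.mpr hne)
  have htwo : ∀ y, u y = a ∨ u y = b := by
    intro y
    by_cases h : u y = a
    · exact Or.inl h
    · right
      have := (mul_eq_zero.mp (hpair y y₀)).resolve_left (sub_ne_zero.mpr h)
      linarith
  set α : ℝ := ∑ y ∈ Finset.univ.filter (fun y => u y = a), p y with hαdef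
  have hy₀T : y₀ ∈ Finset.univ.filter (fun y => u y = a) :=
    Finset.mem_filter.mpr ⟨Finset.mem_univ _, hadef.symm⟩
  have hz₀T : z₀ ∈ Finset.univ.filter (fun y => ¬ u y = a) := by
    simp only [Finset.mem_filter, Finset.mem_univ, true_and]
    intro h; exact hne (hbdef.trans h).symm
  have hα0 : 0 < α := Finset.sum_pos (fun y _ => hppos y) ⟨y₀, hy₀T⟩
  have hαc : α + ∑ y ∈ Finset.univ.filter (fun y => ¬ u y = a), p y = 1 := by
    rw [hαdef, Finset.sum_filter_add_sum_filter_not, hp1]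
  have hα1 : α < 1 := by
    have : 0 < ∑ y ∈ Finset.univ.filter (fun y => ¬ u y = a), p y :=
      Finset.sum_pos (fun y _ => hppos y) ⟨z₀, hz₀T⟩
    linarith
  have hBval : B = α * a + (1 - α) * b := by
    rw [hBdef, ← Finset.sum_filter_add_sum_filter_not Finset.univ (fun y => u y = a)]
    have e1 : ∑ y ∈ Finset.univ.filter (fun y => u y = a), p y * u y = α * a := by
      rw [hαdef, Finset.sum_mul]
      refine Finset.sum_congr rfl fun y hy => ?_
      rw [(Finset.mem_filter.mp hy).2]
    have e2 : ∑ y ∈ Finset.univ.filter (fun y => ¬ u y = a), p y * u y = (1 - α) * b := by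
      have h3 : ∑ y ∈ Finset.univ.filter (fun y => ¬ u y = a), p y * u y
          = (∑ y ∈ Finset.univ.filter (fun y => ¬ u y = a), p y) * b := by
        rw [Finset.sum_mul]
        refine Finset.sum_congr rfl fun y hy => ?_
        rw [(htwo y).resolve_left (Finset.mem_filter.mp hy).2]
      have h4 : ∑ y ∈ Finset.univ.filter (fun y => ¬ u y = a), p y = 1 - α := by linarith
      rw [h3, h4]
    rw [e1, e2]
  have hkey : (1 - 2 * α) * (a - b) = -2 := by linear_combination hab2 + 2 * hBval
  -- main second-order contradiction
  have hmain : ∀ z : S, ∀ αm : ℝ, 0 < 1 - 2 * αm → (1 - 2 * αm) * (u z - (a + b - u z)) = -2 →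
      B = αm * u z + (1 - αm) * (a + b - u z) → 0 < αm → p z ≤ αm → False := by
    intro z αm hm1 hm2 hm3 hm4 hm5
    have hpz := hppos z
    set w : S → ℝ := fun x => (if x = z then (1:ℝ) else 0) - p x with hwdef
    have hw : ∑ x, w x = 0 := by
      rw [hwdef, Finset.sum_sub_distrib, Finset.sum_ite_eq', hp1]
      simp
    have hsum_ite : ∀ f : S → ℝ, ∑ y, (if y = z then (1:ℝ) else 0) * f y = f z := by
      intro f
      simp_rw [ite_mul, one_mul, zero_mul]
      rw [Finset.sum_ite_eq']
      simp
    have s1 : ∑ y, w y * (u y + 1) = u z - B := by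
      have h1 : ∀ y, w y * (u y + 1)
          = (if y = z then (1:ℝ) else 0) * (u y + 1) - (p y * u y + p y) := by
        intro y; rw [hwdef]; ring
      rw [Finset.sum_congr rfl fun y _ => h1 y, Finset.sum_sub_distrib,
        hsum_ite (fun y => u y + 1), Finset.sum_add_distrib, hp1, ← hBdef]
      ring
    have hper2 : ∀ f : S → ℝ, ∑ y, (w y) ^ 2 / p y * f y
        = f z / p z - 2 * f z + ∑ y, p y * f y := by
      intro f
      have h1 : ∀ y, (w y) ^ 2 / p y * f y
          = ((if y = z then (1:ℝ) else 0) * (f y / p y)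
              - 2 * ((if y = z then (1:ℝ) else 0) * f y)) + p y * f y := by
        intro y; rw [hwdef]
        by_cases h : y = z
        · subst h; simp only [if_pos rfl, if_true]
          field_simp
          ring
        · simp only [if_neg h]
          have he : (0 - p y) ^ 2 / p y = p y := by
            rw [zero_sub, neg_sq, sq, mul_div_assoc, div_self (hppos y).ne', mul_one]
          rw [he]
          ring
      rw [Finset.sum_congr rfl fun y _ => h1 y, Finset.sum_add_distrib, Finset.sum_sub_distrib,
        hsum_ite (fun y => f y / p y), ← Finset.mul_sum, hsum_ite f]
    have s0 : ∑ y, (w y) ^ 2 / p y = 1 / p z - 1 := by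
      have h1 : ∑ y, (w y) ^ 2 / p y = ∑ y, (w y) ^ 2 / p y * 1 :=
        Finset.sum_congr rfl fun y _ => (mul_one _).symm
      rw [h1, hper2 (fun _ => 1)]
      simp_rw [mul_one]
      rw [hp1]
      ring
    have s2 : ∑ y, (w y) ^ 2 / p y * (2 * u y + 2)
        = (2 * u z + 2) / p z - 2 * (2 * u z + 2) + (2 * B + 2) := by
      rw [hper2 (fun y => 2 * u y + 2)]
      have h1 : ∑ y, p y * (2 * u y + 2) = 2 * B + 2 := by
        have h2 : ∀ y, p y * (2 * u y + 2) = 2 * (p y * u y) + 2 * p y := fun y => by ring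
        rw [Finset.sum_congr rfl fun y _ => h2 y, Finset.sum_add_distrib,
          ← Finset.mul_sum, ← Finset.mul_sum, hp1, ← hBdef]
        ring
      rw [h1]
    have hsec := hsecond w hw
    rw [s1, s2, s0] at hsec
    have hneg := neg_second αm (p z) (u z) (a + b - u z) B hm1 hm2 hm3 hpz hm5 hm4
    have hid : 2 * ((2 * u z + 2) / p z - 2 * (2 * u z + 2) + (2 * B + 2))
        - 4 * ((u z - B) ^ 2 + B * (1 / p z - 1))
        = 4 * ((u z + 1 - B) * (1 / p z - 2) + 1 - (u z - B) ^ 2) := by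
      field_simp
      ring
    rw [hid] at hsec
    linarith
  rcases lt_trichotomy α (1/2) with hlt | heq | hgt
  · refine hmain y₀ α (by linarith) ?_ ?_ hα0 ?_
    · rw [← hadef]; linear_combination hkey
    · rw [← hadef]; linear_combination hBval
    · exact Finset.single_le_sum (f := p) (fun y _ => (hppos y).le) hy₀T
  · rw [heq] at hkey; norm_num at hkey
  · refine hmain z₀ (1 - α) (by linarith) ?_ ?_ (by linarith) ?_
    · rw [← hbdef]; linear_combination hkey
    · rw [← hbdef]; linear_combination hBval
    · have h5 : p z₀ ≤ ∑ y ∈ Finset.univ.filter (fun y => ¬ u y = a), p y :=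
        Finset.single_le_sum (f := p) (fun y _ => (hppos y).le) hz₀T
      linarith

end BFPOAux

/-- Over full-support distributions `π` on the finite set `S`, the loss
`L π = E_{y,y'∼π⊗π}[(h_π(y,y') − (g y − g y')/τ)²]` has
`π* (y) ∝ π_ref y · exp (g y / τ)` as its unique global minimizer, and no other
local minima exist. -/
theorem bfpo_stmt13 {S : Type*} [Fintype S] [Nonempty S]
    (πref : S → ℝ) (hrefpos : ∀ y, 0 < πref y) (href1 : ∑ y, πref y = 1)
    (τ : ℝ) (hτ : 0 < τ) (g : S → ℝ)
    (L : (S → ℝ) → ℝ)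
    (hL : ∀ p : S → ℝ, L p = ∑ y, ∑ y', p y * p y' *
      (Real.log (p y * πref y' / (p y' * πref y)) - (g y - g y') / τ) ^ 2)
    (πstar : S → ℝ)
    (hπstar : ∀ y, πstar y =
      πref y * Real.exp (g y / τ) / ∑ y', πref y' * Real.exp (g y' / τ))
    (Δ : Set (S → ℝ))
    (hΔ : Δ = {p : S → ℝ | (∀ y, 0 < p y) ∧ (∑ y, p y) = 1}) :
    πstar ∈ Δ ∧
    (∀ π ∈ Δ, L πstar ≤ L π) ∧
    (∀ π ∈ Δ, L π = L πstar → π = πstar) ∧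
    (∀ π ∈ Δ, IsLocalMinOn L Δ π → π = πstar) := by
  classical
  set Z : ℝ := ∑ y', πref y' * Real.exp (g y' / τ) with hZdef
  have hZpos : 0 < Z :=
    Finset.sum_pos (fun y _ => mul_pos (hrefpos y) (Real.exp_pos _)) Finset.univ_nonempty
  set c : S → ℝ := fun y => Real.log (πref y) + g y / τ with hcdef
  have hc : ∀ y, c y = Real.log (πref y) + g y / τ := fun y => rfl
  have hexpc : ∀ y, Real.exp (c y) = πref y * Real.exp (g y / τ) := fun y => by
    rw [hc, Real.exp_add, Real.exp_log (hrefpos y)]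
  have hstar_pos : ∀ y, 0 < πstar y := fun y => by
    rw [hπstar y]; exact div_pos (mul_pos (hrefpos y) (Real.exp_pos _)) hZpos
  have hstar_sum : ∑ y, πstar y = 1 := by
    calc ∑ y, πstar y = ∑ y, (πref y * Real.exp (g y / τ)) / Z :=
          Finset.sum_congr rfl fun y _ => hπstar y
      _ = (∑ y, πref y * Real.exp (g y / τ)) / Z := by rw [Finset.sum_div]
      _ = 1 := div_self hZpos.ne'
  have hstar_mem : πstar ∈ Δ := by
    rw [hΔ]; exact ⟨hstar_pos, hstar_sum⟩
  -- per-term identity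
  have hterm : ∀ p : S → ℝ, (∀ y, 0 < p y) → ∀ y y',
      p y * p y' * (Real.log (p y * πref y' / (p y' * πref y)) - (g y - g y') / τ) ^ 2
        = p y * p y' * ((Real.log (p y) - c y) - (Real.log (p y') - c y')) ^ 2 := by
    intro p hp y y'
    have hlog : Real.log (p y * πref y' / (p y' * πref y))
        = Real.log (p y) + Real.log (πref y') - (Real.log (p y') + Real.log (πref y)) := by
      rw [Real.log_div (mul_pos (hp y) (hrefpos y')).ne' (mul_pos (hp y') (hrefpos y)).ne',
        Real.log_mul (hp y).ne' (hrefpos y').ne', Real.log_mul (hp y').ne' (hrefpos y).ne']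
    rw [hlog, hc y, hc y']
    ring
  -- L in quadratic-form
  have hL2 : ∀ p : S → ℝ, (∀ y, 0 < p y) → (∑ y, p y) = 1 →
      L p = 2 * (∑ y, p y * (Real.log (p y) - c y) ^ 2)
          - 2 * (∑ y, p y * (Real.log (p y) - c y)) ^ 2 := by
    intro p hp hp1
    rw [hL p,
      Finset.sum_congr rfl fun y _ => Finset.sum_congr rfl fun y' _ => hterm p hp y y']
    exact sum_expand p (fun y => Real.log (p y) - c y) hp1
  -- constant-u implies p = πstar
  have hconst : ∀ p : S → ℝ, (∀ y, 0 < p y) → (∑ y, p y) = 1 →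
      (∀ y y', Real.log (p y) - c y = Real.log (p y') - c y') → p = πstar := by
    intro p hp hp1 hu
    have y₀ : S := Classical.arbitrary S
    set k : ℝ := Real.log (p y₀) - c y₀ with hkdef
    have hpy : ∀ y, p y = Real.exp k * (πref y * Real.exp (g y / τ)) := by
      intro y
      have h1 : Real.log (p y) = k + c y := by
        rw [hkdef, ← hu y y₀]; ring
      rw [← Real.exp_log (hp y), h1, Real.exp_add, hexpc y]
    have hZk : Real.exp k * Z = 1 := by
      calc Real.exp k * Z = ∑ y, Real.exp k * (πref y * Real.exp (g y / τ)) := by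
            rw [hZdef, Finset.mul_sum]
        _ = ∑ y, p y := Finset.sum_congr rfl fun y _ => (hpy y).symm
        _ = 1 := hp1
    funext y
    rw [hpy y, hπstar y, eq_div_iff hZpos.ne']
    linear_combination (πref y * Real.exp (g y / τ)) * hZk
  -- L πstar = 0
  have hLstar : L πstar = 0 := by
    rw [hL2 πstar hstar_pos hstar_sum]
    have hu : ∀ y, Real.log (πstar y) - c y = -Real.log Z := by
      intro y
      rw [hπstar y, Real.log_div (mul_pos (hrefpos y) (Real.exp_pos _)).ne' hZpos.ne',
        Real.log_mul (hrefpos y).ne' (Real.exp_pos _).ne', Real.log_exp, hc y]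
      ring
    simp_rw [hu]
    rw [← Finset.sum_mul, ← Finset.sum_mul, hstar_sum]
    ring
  have hLnonneg : ∀ p ∈ Δ, 0 ≤ L p := by
    intro p hp
    rw [hΔ] at hp
    rw [hL p]
    refine Finset.sum_nonneg fun y _ => Finset.sum_nonneg fun y' _ => ?_
    exact mul_nonneg (mul_nonneg (hp.1 y).le (hp.1 y').le) (sq_nonneg _)
  refine ⟨hstar_mem, ?_, ?_, ?_⟩
  · intro p hp
    rw [hLstar]
    exact hLnonneg p hp
  · -- uniqueness of global minimum
    intro p hp hLp
    have hpΔ := hp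
    rw [hΔ] at hpΔ
    obtain ⟨hppos, hp1⟩ := hpΔ
    have h0 : L p = 0 := by rw [hLp, hLstar]
    have hform : L p = ∑ y, ∑ y', p y * p y'
        * ((Real.log (p y) - c y) - (Real.log (p y') - c y')) ^ 2 := by
      rw [hL p]
      exact Finset.sum_congr rfl fun y _ => Finset.sum_congr rfl fun y' _ => hterm p hppos y y'
    rw [hform] at h0
    apply hconst p hppos hp1
    intro y y'
    have houter := (Finset.sum_eq_zero_iff_of_nonneg (fun y _ =>
      Finset.sum_nonneg fun y' _ =>
        mul_nonneg (mul_nonneg (hppos y).le (hppos y').le) (sq_nonneg _))).mp h0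
    have hinner := (Finset.sum_eq_zero_iff_of_nonneg (fun y' _ =>
      mul_nonneg (mul_nonneg (hppos y).le (hppos y').le) (sq_nonneg _))).mp
        (houter y (Finset.mem_univ y))
    have h1 := hinner y' (Finset.mem_univ y')
    have h2 : ((Real.log (p y) - c y) - (Real.log (p y') - c y')) ^ 2 = 0 :=
      (mul_eq_zero.mp h1).resolve_left (mul_pos (hppos y) (hppos y')).ne'
    have h3 := pow_eq_zero_iff (n := 2) (by norm_num) |>.mp h2
    linarith [sub_eq_zero.mp h3]
  · -- no spurious local minima
    intro p hp hmin
    have hpΔ := hp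
    rw [hΔ] at hpΔ
    obtain ⟨hppos, hp1⟩ := hpΔ
    by_cases hcst : ∀ y y', Real.log (p y) - c y = Real.log (p y') - c y'
    · exact hconst p hppos hp1 hcst
    · exfalso
      push_neg at hcst
      obtain ⟨y₀, y₁, hne⟩ := hcst
      exact no_spurious p (fun y => Real.log (p y) - c y) hppos hp1
        (fun w hw => (aux_conditions c L hL2 Δ hΔ p hppos hp1 hmin w hw).1)
        (fun w hw => (aux_conditions c L hL2 Δ hΔ p hppos hp1 hmin w hw).2)
        y₀ y₁ hne
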